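/- arXiv:1612.05812 — 3 statements merged into one kernel-verified Lean document; each statement's English description precedes it below -/
import Mathlib

section
/- If g is positive real and not identically zero, then 1/g is positive real on the open right half-plane (wherever defined), and in fact g has no zeros in the open right half-plane. -/
/-- A transfer function `g : ℂ → ℂ` is positive real (PR) if it is analytic
(differentiable) on the open right half-plane, real-valued on the positive
real axis, and has nonnegative real part on the open right half-plane. -/
def IsPositiveReal (g : ℂ → ℂ) : Prop :=
  DifferentiableOn ℂ g {s : ℂ | 0 < s.re} ∧
  (∀ x : ℝ, 0 < x → (g (x : ℂ)).im = 0) ∧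
  (∀ s : ℂ, 0 < s.re → 0 ≤ (g s).re)

/-- if `g` is positive real and not identically zero on the open
right half-plane, then `g` has no zeros there and `1/g` is positive real. -/
theorem positiveReal_inv (g : ℂ → ℂ) (hg : IsPositiveReal g)
    (hnz : ¬ ∀ s : ℂ, 0 < s.re → g s = 0) :
    (∀ s : ℂ, 0 < s.re → g s ≠ 0) ∧ IsPositiveReal (fun s => (g s)⁻¹) := by
  obtain ⟨hdiff, hreal, hre⟩ := hg
  have hΩ : IsOpen {s : ℂ | 0 < s.re} := by
    have : {s : ℂ | 0 < s.re} = Complex.re ⁻¹' Set.Ioi 0 := rfl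
    rw [this]; exact isOpen_Ioi.preimage Complex.continuous_re
  have hconn : IsPreconnected {s : ℂ | 0 < s.re} :=
    (convex_halfSpace_re_gt (0 : ℝ)).isPreconnected
  have han : AnalyticOnNhd ℂ g {s : ℂ | 0 < s.re} :=
    hdiff.analyticOnNhd hΩ
  have hne : ∀ s : ℂ, 0 < s.re → g s ≠ 0 := by
    intro s hs hzero
    rcases han.is_constant_or_isOpen hconn with ⟨w, hw⟩ | hopen
    · have hw0 : w = 0 := by rw [← hw s hs, hzero]
      exact hnz fun t ht => by rw [hw t ht, hw0]
    · have himg : IsOpen (g '' {s : ℂ | 0 < s.re}) :=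
        hopen _ le_rfl hΩ
      have h0 : (0 : ℂ) ∈ g '' {s : ℂ | 0 < s.re} := ⟨s, hs, hzero⟩
      obtain ⟨r, hr, hball⟩ := Metric.isOpen_iff.mp himg 0 h0
      have hmem : (-(r/2) : ℂ) ∈ Metric.ball (0 : ℂ) r := by
        rw [Metric.mem_ball, Complex.dist_eq, sub_zero, norm_neg,
          show ((r:ℂ)/2) = ((r/2 : ℝ) : ℂ) by push_cast; ring, Complex.norm_real, Real.norm_eq_abs,
          abs_of_pos (half_pos hr)]
        linarith
      obtain ⟨t, ht, hgt⟩ := hball hmem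
      have : 0 ≤ (g t).re := hre t ht
      rw [hgt] at this
      simp at this
      linarith [half_pos hr]
  refine ⟨hne, ?_, ?_, ?_⟩
  · intro s hs
    exact (hdiff s hs).inv (hne s hs)
  · intro x hx
    have : (g x).im = 0 := hreal x hx
    simp [Complex.inv_im, this]
  · intro s hs
    have h1 : 0 ≤ (g s).re := hre s hs
    simp only [Complex.inv_re]
    exact div_nonneg h1 (Complex.normSq_nonneg _)
end

section
/- Let L be a symmetric weighted Laplacian with nonnegative edge weights and let D = diag(d₁,…,dₙ) with dᵢ > 0. If dᵢ · L_{ii} ≤ 1 for every i, then all eigenvalues of D^{1/2} L D^{1/2} lie in the interval [0, 2]. -/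
open Matrix BigOperators

/-- if `L` is a symmetric weighted Laplacian with nonnegative edge
weights, `D = diag d` with `dᵢ > 0`, and `dᵢ · L_{ii} ≤ 1` for all `i`, then all
eigenvalues of `D^{1/2} L D^{1/2}` lie in `[0, 2]`. -/
theorem scaled_laplacian_eigenvalues_mem_Icc (n : ℕ) (B : Fin n → Fin n → ℝ)
    (hsymm : ∀ i j, B i j = B j i) (hnonneg : ∀ i j, i ≠ j → 0 ≤ B i j)
    (L : Matrix (Fin n) (Fin n) ℝ)
    (hLoff : ∀ i j, i ≠ j → L i j = -B i j)
    (hLdiag : ∀ i, L i i = ∑ j ∈ Finset.univ.filter (· ≠ i), B i j)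
    (d : Fin n → ℝ) (hd : ∀ i, 0 < d i)
    (hbound : ∀ i, d i * L i i ≤ 1)
    (A : Matrix (Fin n) (Fin n) ℝ)
    (hA : A = fun i j => Real.sqrt (d i) * L i j * Real.sqrt (d j))
    (hAh : A.IsHermitian) :
    ∀ i, hAh.eigenvalues i ∈ Set.Icc (0 : ℝ) 2 := by
  intro i
  set μ := hAh.eigenvalues i with hμ
  set v : Fin n → ℝ := ⇑(hAh.eigenvectorBasis i) with hv
  have hvne : v ≠ 0 := by
    have := hAh.eigenvectorBasis.orthonormal.ne_zero i
    intro h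
    apply this
    ext k
    exact congrFun h k
  have hAv : A *ᵥ v = μ • v := hAh.mulVec_eigenvectorBasis i
  -- the matrix M = diag(d) * L
  set M : Matrix (Fin n) (Fin n) ℝ := fun k j => d k * L k j with hM
  set w : Fin n → ℝ := fun k => Real.sqrt (d k) * v k with hw
  have hwne : w ≠ 0 := by
    intro h
    apply hvne
    ext k
    have hk := congrFun h k
    simp only [hw, Pi.zero_apply] at hk
    have hs : Real.sqrt (d k) ≠ 0 := ne_of_gt (Real.sqrt_pos.mpr (hd k))
    simpa using (mul_eq_zero.mp hk).resolve_left hs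
  have hMw : M *ᵥ w = μ • w := by
    ext k
    have h1 : (A *ᵥ v) k = μ * v k := by rw [hAv]; rfl
    have h2 : (A *ᵥ v) k = ∑ j, Real.sqrt (d k) * L k j * Real.sqrt (d j) * v j := by
      simp [hA, mulVec, dotProduct]
    have h3 : (M *ᵥ w) k = ∑ j, d k * L k j * (Real.sqrt (d j) * v j) := by
      simp [hM, hw, mulVec, dotProduct]
    have hdk : d k = Real.sqrt (d k) * Real.sqrt (d k) :=
      (Real.mul_self_sqrt (hd k).le).symm
    calc (M *ᵥ w) k = ∑ j, Real.sqrt (d k) * (Real.sqrt (d k) * L k j * Real.sqrt (d j) * v j) := by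
          rw [h3]; apply Finset.sum_congr rfl; intro j _; conv_lhs => rw [hdk]
          ring
      _ = Real.sqrt (d k) * ((A *ᵥ v) k) := by rw [h2, Finset.mul_sum]
      _ = Real.sqrt (d k) * (μ * v k) := by rw [h1]
      _ = μ • w k := by simp [hw, smul_eq_mul]; ring
  have hev : Module.End.HasEigenvalue (Matrix.toLin' M) μ := by
    apply Module.End.hasEigenvalue_of_hasEigenvector (x := w)
    constructor
    · rw [Module.End.mem_eigenspace_iff, Matrix.toLin'_apply, hMw]
    · exact hwne
  obtain ⟨k, hk⟩ := eigenvalue_mem_ball hev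
  rw [Metric.mem_closedBall, Real.dist_eq] at hk
  have hMkk : M k k = d k * L k k := rfl
  have hrad : ∑ j ∈ Finset.univ.erase k, ‖M k j‖ = d k * L k k := by
    rw [hLdiag k, Finset.mul_sum]
    rw [show Finset.univ.filter (· ≠ k) = Finset.univ.erase k from Finset.filter_ne' _ _]
    apply Finset.sum_congr rfl
    intro j hj
    have hjk : j ≠ k := Finset.ne_of_mem_erase hj
    rw [hM]
    simp only [hLoff k j (Ne.symm hjk)]
    rw [Real.norm_eq_abs, abs_of_nonpos (by
      have := hnonneg k j (Ne.symm hjk)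
      nlinarith [(hd k).le])]
    ring
  have hc0 : 0 ≤ d k * L k k := by
    rw [hLdiag k, Finset.mul_sum]
    apply Finset.sum_nonneg
    intro j hj
    have hjk : j ≠ k := (Finset.mem_filter.mp hj).2
    exact mul_nonneg (hd k).le (hnonneg k j (Ne.symm hjk))
  have hc1 : d k * L k k ≤ 1 := hbound k
  rw [hMkk, hrad] at hk
  rcases abs_le.mp hk with ⟨h1, h2⟩
  constructor <;> linarith
end

section
/- Let A ∈ ℂ^{n×n} be Hermitian positive semidefinite, and let Q ∈ ℂ^{n×m} have orthonormal columns (Q*Q = I). If A = Q X Q* with X Hermitian positive definite and the spectrum of X contained in (0,1], then for any diagonal matrix P(s) = diag(p₁,…,pₙ) of complex numbers, every eigenvalue of Q* P Q X lies in the set Co({p₁,…,pₙ}) · (0,1], where Co denotes the convex hull and the product is the set {c·t : c ∈ Co({pᵢ}), t ∈ (0,1]}. -/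
open Matrix
open scoped ComplexOrder

lemma aux_sub_sq_posSemidef (m : ℕ) (X : Matrix (Fin m) (Fin m) ℂ) (hH : X.IsHermitian)
    (h : ∀ i, hH.eigenvalues i ∈ Set.Ioc (0:ℝ) 1) : (X - X * X).PosSemidef := by
  have hU : (star (hH.eigenvectorUnitary : Matrix (Fin m) (Fin m) ℂ)) * hH.eigenvectorUnitary = 1 :=
    (Matrix.mem_unitaryGroup_iff').mp hH.eigenvectorUnitary.2
  have key : X - X * X = (hH.eigenvectorUnitary : Matrix (Fin m) (Fin m) ℂ) *
      diagonal (fun i => ((hH.eigenvalues i - hH.eigenvalues i ^ 2 : ℝ) : ℂ)) *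
      (hH.eigenvectorUnitary : Matrix (Fin m) (Fin m) ℂ)ᴴ := by
    conv_lhs => rw [hH.spectral_theorem, Unitary.conjStarAlgAut_apply]
    rw [← star_eq_conjTranspose]
    set U := (hH.eigenvectorUnitary : Matrix (Fin m) (Fin m) ℂ)
    set D := diagonal ((RCLike.ofReal : ℝ → ℂ) ∘ hH.eigenvalues)
    have : U * D * star U * (U * D * star U) = U * (D * D) * star U := by
      rw [mul_assoc, mul_assoc, mul_assoc]
      rw [← mul_assoc (star U) U, hU, one_mul]; simp [mul_assoc]
    rw [this, ← sub_mul, ← mul_sub]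
    have hD : D - D * D = diagonal (fun i => ((hH.eigenvalues i - hH.eigenvalues i ^ 2 : ℝ) : ℂ)) := by
      simp only [D]
      rw [diagonal_mul_diagonal, diagonal_sub]
      refine congrArg diagonal (funext fun i => ?_)
      simp only [Function.comp_apply, Pi.sub_apply, Pi.mul_apply, ← RCLike.algebraMap_eq_ofReal,
        Complex.coe_algebraMap]
      push_cast
      ring
    rw [hD]
  rw [key]
  refine PosSemidef.mul_mul_conjTranspose_same ?_ _
  rw [posSemidef_diagonal_iff]
  intro i
  have := h i
  rw [← Complex.ofReal_zero, Complex.real_le_real]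
  nlinarith [this.1, this.2]

/-- eigenvalue containment. If `A = Q X Qᴴ` is Hermitian PSD with
`QᴴQ = I`, `X` Hermitian positive definite with spectrum in `(0,1]`, then every
eigenvalue of `Qᴴ P Q X`, for `P = diag(p₁,…,pₙ)`, lies in `Co({pᵢ})·(0,1]`. -/
theorem eigenvalues_mem_convexHull_mul_Ioc (n m : ℕ)
    (Q : Matrix (Fin n) (Fin m) ℂ) (hQ : Qᴴ * Q = 1)
    (X : Matrix (Fin m) (Fin m) ℂ) (hX : X.PosDef)
    (hXspec : ∀ i, hX.1.eigenvalues i ∈ Set.Ioc (0 : ℝ) 1)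
    (A : Matrix (Fin n) (Fin n) ℂ) (hA : A.PosSemidef) (hAQ : A = Q * X * Qᴴ)
    (p : Fin n → ℂ) :
    ∀ μ ∈ spectrum ℂ (Qᴴ * Matrix.diagonal p * Q * X),
      ∃ c ∈ convexHull ℝ (Set.range p), ∃ t : ℝ, t ∈ Set.Ioc (0 : ℝ) 1 ∧
        μ = (t : ℂ) * c := by
  intro μ hμ
  -- extract an eigenvector
  rw [← AlgEquiv.spectrum_eq (Matrix.toLinAlgEquiv' (R := ℂ) (n := Fin m)),
      ← Module.End.hasEigenvalue_iff_mem_spectrum] at hμ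
  obtain ⟨v, hv⟩ := hμ.exists_hasEigenvector
  have hv0 : v ≠ 0 := hv.right
  have hvEq : (Qᴴ * Matrix.diagonal p * Q * X) *ᵥ v = μ • v := by
    have := hv.apply_eq_smul
    simpa [Matrix.toLinAlgEquiv'_apply] using this
  set w := X *ᵥ v with hw
  set u := Q *ᵥ w with hu
  set d := star v ⬝ᵥ (X *ᵥ v) with hd
  have hdpos : 0 < d := hX.dotProduct_mulVec_pos hv0
  have hdre : 0 < d.re ∧ d.im = 0 := by
    have := Complex.lt_def.mp hdpos
    exact ⟨by simpa using this.1, by simpa using this.2.symm⟩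
  have hdC : ((d.re : ℂ)) = d := by
    apply Complex.ext <;> simp [hdre.2]
  have hwv : star w ⬝ᵥ v = d := by
    rw [hw, star_mulVec, ← dotProduct_mulVec, hX.1.eq, hd]
  -- numerator identity
  have hN : star w ⬝ᵥ ((Qᴴ * Matrix.diagonal p * Q) *ᵥ w) = μ * d := by
    have h1 : (Qᴴ * Matrix.diagonal p * Q) *ᵥ w = μ • v := by
      rw [hw, mulVec_mulVec, hvEq]
    rw [h1, dotProduct_smul, hwv, smul_eq_mul]
  -- numerator via u
  have hN2 : star w ⬝ᵥ ((Qᴴ * Matrix.diagonal p * Q) *ᵥ w)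
      = ∑ i, Complex.normSq (u i) • p i := by
    rw [← mulVec_mulVec, ← mulVec_mulVec, dotProduct_mulVec, ← star_mulVec, ← hu]
    rw [dotProduct]
    refine Finset.sum_congr rfl fun i _ => ?_
    rw [mulVec_diagonal, Complex.real_smul, Pi.star_apply, Complex.star_def]
    rw [show (starRingEnd ℂ) (u i) * (p i * u i) = ((starRingEnd ℂ) (u i) * u i) * p i from by ring,
      ← Complex.normSq_eq_conj_mul_self]
  set S : ℝ := ∑ i, Complex.normSq (u i) with hS
  have hSC : (S : ℂ) = star w ⬝ᵥ w := by
    have h1 : star u ⬝ᵥ u = star w ⬝ᵥ w := by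
      rw [hu, star_mulVec, ← dotProduct_mulVec, mulVec_mulVec, hQ, one_mulVec]
    rw [← h1, dotProduct, hS]
    push_cast
    refine Finset.sum_congr rfl fun i _ => ?_
    rw [Pi.star_apply, Complex.star_def, ← Complex.normSq_eq_conj_mul_self]
  have hSd : star w ⬝ᵥ w = star v ⬝ᵥ ((X * X) *ᵥ v) := by
    rw [hw, star_mulVec, ← dotProduct_mulVec, hX.1.eq, mulVec_mulVec]
  have hsub : 0 ≤ d - (S : ℂ) := by
    have := (aux_sub_sq_posSemidef m X hX.1 hXspec).dotProduct_mulVec_nonneg v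
    rwa [sub_mulVec, dotProduct_sub, ← hd, ← hSd, ← hSC] at this
  have hSled : S ≤ d.re := by
    have := (Complex.le_def.mp hsub).1
    simp only [Complex.sub_re, Complex.ofReal_re, Complex.zero_re] at this
    linarith
  have hSpos : 0 < S := by
    rcases lt_or_eq_of_le (Finset.sum_nonneg fun i _ => Complex.normSq_nonneg (u i) : (0:ℝ) ≤ S) with h | h
    · exact h
    · exfalso
      have hw0 : w = 0 := by
        rw [← dotProduct_star_self_eq_zero (v := w), ← hSC, hS, ← h]
        norm_num
      rw [hw0] at hwv
      simp at hwv
      rw [← hwv] at hdpos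
      exact lt_irrefl _ hdpos
  -- the convex combination
  refine ⟨Finset.univ.centerMass (fun i => Complex.normSq (u i)) p, ?_, S / d.re, ⟨?_, ?_⟩, ?_⟩
  · refine Finset.centerMass_mem_convexHull _ (fun i _ => Complex.normSq_nonneg _) ?_
      (fun i _ => Set.mem_range_self i)
    · rw [← hS]; exact hSpos
  · exact div_pos hSpos hdre.1
  · rw [div_le_one hdre.1]; exact hSled
  · have hsum : ∑ i, Complex.normSq (u i) • p i = μ * d := by rw [← hN2, hN]
    rw [Finset.centerMass, ← hS, hsum, Complex.real_smul, ← hdC]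
    push_cast
    have hS0 : (S : ℂ) ≠ 0 := by exact_mod_cast hSpos.ne'
    have hd0 : (d.re : ℂ) ≠ 0 := by exact_mod_cast hdre.1.ne'
    field_simp
    rw [Complex.ofReal_re, mul_div_cancel_right₀ _ hd0]
end
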